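/- For σ,φ permutations of {1,…,n} and τ,ψ∈T⁰_n, one has f^τ∘σ ⪯ f^ψ∘φ in O_n if and only if f^τ ⪯ f^ψ and σφ⁻¹ ∈ Σ_ψ, where Σ_ψ = {π : f^ψ∘π = f^ψ}. -/

import Mathlib

/-- `f^τ ∈ O_n` for `τ ∈ T⁰_n`: `f^τ(i) = 1 + Σ_{j<i} τ(j)` (0-indexed here). -/
def fT {m : ℕ} (τ : Fin m → Bool) (i : Fin (m + 1)) :
    Fin ((∑ j, if τ j then 1 else 0) + 1) :=
  ⟨∑ j ∈ Finset.univ.filter (fun j : Fin m => (j : ℕ) < (i : ℕ)), (if τ j then 1 else 0), by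
    have h := Finset.sum_le_sum_of_subset
      (f := fun j : Fin m => if τ j then 1 else 0)
      (Finset.filter_subset (fun j : Fin m => (j : ℕ) < (i : ℕ)) Finset.univ)
    exact Nat.lt_succ_of_le (by simpa using h)⟩

theorem fT_monotone {m : ℕ} (τ : Fin m → Bool) : Monotone (fT τ) := by
  intro i i' hii
  simp only [fT, Fin.mk_le_mk]
  apply Finset.sum_le_sum_of_subset
  intro j hj
  simp only [Finset.mem_filter, Finset.mem_univ, true_and] at hj ⊢
  exact lt_of_lt_of_le hj hii

/-- For permutations `σ, φ` of `{1,…,n}` and `τ, ψ ∈ T⁰_n`: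
`f^τ∘σ ⪯ f^ψ∘φ` iff `f^τ ⪯ f^ψ` and `σφ⁻¹ ∈ Σ_ψ = {π : f^ψ∘π = f^ψ}`. -/
theorem stmt14 {m : ℕ} (τ ψ : Fin m → Bool) (σ φ : Equiv.Perm (Fin (m + 1))) :
    (∃ h : Fin ((∑ j, if τ j then 1 else 0) + 1) → Fin ((∑ j, if ψ j then 1 else 0) + 1),
      Monotone h ∧ (fT ψ) ∘ φ = h ∘ ((fT τ) ∘ σ)) ↔
    ((∃ h : Fin ((∑ j, if τ j then 1 else 0) + 1) → Fin ((∑ j, if ψ j then 1 else 0) + 1),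
        Monotone h ∧ fT ψ = h ∘ fT τ) ∧
      (fT ψ) ∘ (σ * φ⁻¹) = fT ψ) := by
  have hmonoτ : Monotone (fT τ) := fT_monotone τ
  have hmonoψ : Monotone (fT ψ) := fT_monotone ψ
  constructor
  · rintro ⟨h, hmono, heq⟩
    have h1 : fT ψ = (h ∘ fT τ) ∘ ⇑(σ * φ⁻¹) := by
      funext x
      have := congrFun heq (φ⁻¹ x)
      simpa [Equiv.Perm.mul_apply] using this
    have hF : Monotone (h ∘ fT τ) := hmono.comp hmonoτ
    have h2 : (h ∘ fT τ) ∘ ⇑(σ * φ⁻¹) = (h ∘ fT τ) ∘ ⇑(1 : Equiv.Perm (Fin (m + 1))) :=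
      Tuple.unique_monotone (by rw [← h1]; exact hmonoψ) (by simpa using hF)
    have h3 : fT ψ = h ∘ fT τ := by
      rw [h1, h2]; funext x; simp
    refine ⟨⟨h, hmono, h3⟩, ?_⟩
    rw [h3]; exact h1.symm.trans h3
  · rintro ⟨⟨h, hmono, h3⟩, h4⟩
    refine ⟨h, hmono, ?_⟩
    funext x
    have h5 := congrFun h4 (φ x)
    simp only [Function.comp_apply, Equiv.Perm.mul_apply, Equiv.Perm.inv_def, Equiv.symm_apply_apply] at h5
    calc fT ψ (φ x) = fT ψ (σ x) := h5.symm
    _ = h (fT τ (σ x)) := congrFun h3 (σ x)
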